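/- arXiv:1401.5897 — 3 statements merged into one kernel-verified Lean document; each statement's English description precedes it below -/
import Mathlib

section
/- Monotonicity of density evolution: for all iterations i ≥ 0 and all sections l ∈ {0,...,L-1}, u_l(i) ≤ u_l(i+1), where u_l and v_l evolve by the coupled density-evolution recursions. -/
/-- Monotonicity of discrete density evolution: u_l(i) ≤ u_l(i+1) for all
iterations i and sections l ∈ {0,...,L-1}. -/
theorem de_monotone
    (L W d dt : ℕ) (hW : 1 ≤ W) (hL : W ≤ L)
    (φ : (Fin d → ℝ) → ℝ) (ψ : (Fin dt → ℝ) → ℝ)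
    (hφ : Monotone φ) (hψ : Monotone ψ)
    (u v : ℕ → ℤ → ℝ) (umin vopt : ℝ)
    (humin : ∀ x, umin ≤ φ x) (hvopt : ∀ x, ψ x ≤ vopt)
    (hu0 : ∀ l : ℤ, u 0 l = umin)
    (hrecu : ∀ i : ℕ, ∀ l : ℤ, 0 ≤ l → l ≤ (L : ℤ) - 1 →
      u (i + 1) l = (1 / (W : ℝ) ^ d) *
        ∑ w : Fin d → Fin W, φ (fun j => v i (l + (w j : ℤ))))
    (hrecv : ∀ i : ℕ, ∀ l : ℤ, (W : ℤ) - 1 ≤ l → l ≤ (L : ℤ) - 1 →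
      v i l = (1 / (W : ℝ) ^ dt) *
        ∑ w : Fin dt → Fin W, ψ (fun j => u i (l - (w j : ℤ))))
    (hbdry : ∀ i : ℕ, ∀ l : ℤ, ¬((W : ℤ) - 1 ≤ l ∧ l ≤ (L : ℤ) - 1) → v i l = vopt) :
    ∀ i : ℕ, ∀ l : ℤ, 0 ≤ l → l ≤ (L : ℤ) - 1 → u i l ≤ u (i + 1) l := by
  have hW0 : (0:ℝ) < W := by exact_mod_cast hW
  have hWpos : (0:ℝ) < (W:ℝ)^d := pow_pos hW0 d
  intro i
  induction i with
  | zero =>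
    intro l hl0 hl1
    rw [hu0 l, hrecu 0 l hl0 hl1]
    have hcard : ((Fintype.card (Fin d → Fin W)) : ℝ) = (W:ℝ)^d := by
      simp
    calc umin = (1/(W:ℝ)^d) * ((W:ℝ)^d * umin) := by field_simp
      _ ≤ (1/(W:ℝ)^d) * ∑ w : Fin d → Fin W, φ (fun j => v 0 (l + (w j : ℤ))) := by
          apply mul_le_mul_of_nonneg_left _ (by positivity)
          calc (W:ℝ)^d * umin
              = ∑ _w : Fin d → Fin W, umin := by
                rw [Finset.sum_const, Finset.card_univ, nsmul_eq_mul, hcard]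
            _ ≤ _ := Finset.sum_le_sum (fun w _ => humin _)
  | succ i ih =>
    have hv : ∀ l : ℤ, v i l ≤ v (i+1) l := by
      intro l
      by_cases h : (W:ℤ) - 1 ≤ l ∧ l ≤ (L:ℤ) - 1
      · rw [hrecv i l h.1 h.2, hrecv (i+1) l h.1 h.2]
        apply mul_le_mul_of_nonneg_left _ (by positivity)
        apply Finset.sum_le_sum
        intro w _
        apply hψ
        intro j
        have hwj : ((w j : ℤ)) ≤ (W:ℤ) - 1 := by
          have := (w j).isLt
          omega
        exact ih (l - (w j : ℤ)) (by omega) (by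
          have : (0:ℤ) ≤ (w j : ℤ) := Int.ofNat_nonneg _
          omega)
      · rw [hbdry i l h, hbdry (i+1) l h]
    intro l hl0 hl1
    rw [hrecu i l hl0 hl1, hrecu (i+1) l hl0 hl1]
    apply mul_le_mul_of_nonneg_left _ (by positivity)
    apply Finset.sum_le_sum
    intro w _
    exact hφ fun j => hv _
end

section
/- Monotonicity of the continuum DE: for the integral systems u(x,i+1) = (2α)^{-d} ∫_{[−α,α]^d} φ(v(x+ω₁,i),...,v(x+ω_d,i)) dω and v(x,i) = (2α)^{-d̃} ∫_{[−α,α]^{d̃}} ψ(u(x−ω₁,i),...,u(x−ω_{d̃},i)) dω, with initialization u(x,0) = u_min ≤ inf φ and boundary v(x,i) = v_opt ≥ sup ψ for |x| > 1−α, one has u(x,i) ≤ u(x,i+1) and v(x,i) ≤ v(x,i+1) for all x ∈ [−1,1] and all i. -/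
open MeasureTheory

/-- Auxiliary measurable version of the `u` sequence. -/
noncomputable def hseq (d : ℕ) (α : ℝ) (φ : (Fin d → ℝ) → ℝ) (umin : ℝ) (v : ℕ → ℝ → ℝ) :
    ℕ → ℝ → ℝ
  | 0 => fun _ => umin
  | (j + 1) => fun x => (1 / (2 * α) ^ d) *
      ∫ ω in Set.Icc (fun _ : Fin d => -α) (fun _ => α), φ (fun j' => v j (x + ω j'))

/-- Monotonicity of the continuum density evolution: with worst-case
initialization and best boundary condition, u(x,i) ≤ u(x,i+1) and
v(x,i) ≤ v(x,i+1) for all x ∈ [−1,1] and all i. -/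
theorem continuum_de_monotone
    (d dt : ℕ) (α : ℝ) (hα0 : 0 < α) (hα1 : α < 1)
    (φ : (Fin d → ℝ) → ℝ) (ψ : (Fin dt → ℝ) → ℝ)
    (hφc : Continuous φ) (hψc : Continuous ψ)
    (hφm : Monotone φ) (hψm : Monotone ψ)
    (hφbdd : ∃ M, ∀ x, |φ x| ≤ M) (hψbdd : ∃ M, ∀ x, |ψ x| ≤ M)
    (umin vopt : ℝ) (humin : ∀ x, umin ≤ φ x) (hvopt : ∀ x, ψ x ≤ vopt)
    (u v : ℕ → ℝ → ℝ)
    (hu0 : ∀ x ∈ Set.Icc (-1 : ℝ) 1, u 0 x = umin)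
    (hrecu : ∀ i : ℕ, ∀ x ∈ Set.Icc (-1 : ℝ) 1,
      u (i + 1) x = (1 / (2 * α) ^ d) *
        ∫ ω in Set.Icc (fun _ : Fin d => -α) (fun _ => α), φ (fun j => v i (x + ω j)))
    (hrecv : ∀ i : ℕ, ∀ x : ℝ, |x| ≤ 1 - α →
      v i x = (1 / (2 * α) ^ dt) *
        ∫ ω in Set.Icc (fun _ : Fin dt => -α) (fun _ => α), ψ (fun j => u i (x - ω j)))
    (hbdry : ∀ i : ℕ, ∀ x : ℝ, 1 - α < |x| → v i x = vopt) :
    ∀ i : ℕ, ∀ x ∈ Set.Icc (-1 : ℝ) 1, u i x ≤ u (i + 1) x ∧ v i x ≤ v (i + 1) x := by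
  obtain ⟨Mφ, hMφ⟩ := hφbdd
  obtain ⟨Mψ, hMψ⟩ := hψbdd
  set Sd : Set (Fin d → ℝ) := Set.Icc (fun _ => -α) (fun _ => α) with hSd
  set St : Set (Fin dt → ℝ) := Set.Icc (fun _ => -α) (fun _ => α) with hSt
  have h2α : (0:ℝ) < 2 * α := by linarith
  -- volumes of the cubes
  have hvold : volume Sd = ENNReal.ofReal ((2 * α) ^ d) := by
    rw [hSd, Real.volume_Icc_pi]
    simp only [sub_neg_eq_add, Finset.prod_const, Finset.card_univ, Fintype.card_fin]
    rw [← ENNReal.ofReal_pow (by linarith : (0:ℝ) ≤ α + α)]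
    congr 1
    ring
  have hvolt : volume St = ENNReal.ofReal ((2 * α) ^ dt) := by
    rw [hSt, Real.volume_Icc_pi]
    simp only [sub_neg_eq_add, Finset.prod_const, Finset.card_univ, Fintype.card_fin]
    rw [← ENNReal.ofReal_pow (by linarith : (0:ℝ) ≤ α + α)]
    congr 1
    ring
  have hvold_ne : volume Sd ≠ ⊤ := by rw [hvold]; exact ENNReal.ofReal_ne_top
  have hvolt_ne : volume St ≠ ⊤ := by rw [hvolt]; exact ENNReal.ofReal_ne_top
  have hvold_toReal : (volume Sd).toReal = (2 * α) ^ d := by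
    rw [hvold, ENNReal.toReal_ofReal (by positivity)]
  have hcd_pos : (0:ℝ) < 1 / (2 * α) ^ d := by positivity
  have hct_pos : (0:ℝ) < 1 / (2 * α) ^ dt := by positivity
  have hnormd : (1 / (2 * α) ^ d) * ((2 * α) ^ d) = 1 := by
    field_simp
  -- the measurable version of u
  set g : ℕ → ℝ → ℝ := hseq d α φ umin v with hg
  have hg0 : ∀ x, g 0 x = umin := fun _ => rfl
  have hgS : ∀ j x, g (j + 1) x =
      (1 / (2 * α) ^ d) * ∫ ω in Sd, φ (fun j' => v j (x + ω j')) := fun _ _ => rfl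
  have hue : ∀ i : ℕ, ∀ x ∈ Set.Icc (-1:ℝ) 1, u i x = g i x := by
    intro i x hx
    cases i with
    | zero => rw [hu0 x hx, hg0]
    | succ j => rw [hrecu j x hx, hgS]
  -- integrability of the φ-integrand, given measurability of w
  have integφ : ∀ (w : ℝ → ℝ), Measurable w → ∀ x : ℝ,
      IntegrableOn (fun ω : Fin d → ℝ => φ (fun j => w (x + ω j))) Sd volume := by
    intro w hw x
    refine Measure.integrableOn_of_bounded hvold_ne ?_ (M := Mφ) ?_
    · refine (hφc.measurable.comp (measurable_pi_lambda _ fun j => ?_)).aestronglyMeasurable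
      exact hw.comp (measurable_const.add (measurable_pi_apply j))
    · exact Filter.Eventually.of_forall fun ω => by
        simpa [Real.norm_eq_abs] using hMφ (fun j => w (x + ω j))
  have integψ : ∀ (w : ℝ → ℝ), Measurable w → ∀ x : ℝ,
      IntegrableOn (fun ω : Fin dt → ℝ => ψ (fun j => w (x - ω j))) St volume := by
    intro w hw x
    refine Measure.integrableOn_of_bounded hvolt_ne ?_ (M := Mψ) ?_
    · refine (hψc.measurable.comp (measurable_pi_lambda _ fun j => ?_)).aestronglyMeasurable
      exact hw.comp (measurable_const.sub (measurable_pi_apply j))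
    · exact Filter.Eventually.of_forall fun ω => by
        simpa [Real.norm_eq_abs] using hMψ (fun j => w (x - ω j))
  have hSdm : MeasurableSet Sd := measurableSet_Icc
  have hStm : MeasurableSet St := measurableSet_Icc
  -- points stay in [-1,1]
  have harg : ∀ x : ℝ, |x| ≤ 1 - α → ∀ ω ∈ St, ∀ j : Fin dt,
      x - ω j ∈ Set.Icc (-1:ℝ) 1 := by
    intro x hx ω hω j
    obtain ⟨h1, h2⟩ := hω
    have hj1 : -α ≤ ω j := h1 j
    have hj2 : ω j ≤ α := h2 j
    have := abs_le.1 hx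
    constructor <;> [linarith [this.1]; linarith [this.2]]
  -- interior formula for v in terms of g
  have hvg : ∀ i : ℕ, ∀ x : ℝ, |x| ≤ 1 - α →
      v i x = (1 / (2 * α) ^ dt) * ∫ ω in St, ψ (fun j => g i (x - ω j)) := by
    intro i x hx
    rw [hrecv i x hx]
    congr 1
    refine setIntegral_congr_fun hStm fun ω hω => ?_
    congr 1
    funext j
    exact hue i _ (harg x hx ω hω j)
  -- measurability of v i given measurability of g i
  have measv_of_g : ∀ i : ℕ, Measurable (g i) → Measurable (v i) := by
    intro i hgi
    have hveq : v i = fun x =>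
        if |x| ≤ 1 - α then
          (1 / (2 * α) ^ dt) * ∫ ω in St, ψ (fun j => g i (x - ω j))
        else vopt := by
      funext x
      by_cases hx : |x| ≤ 1 - α
      · rw [if_pos hx]; exact hvg i x hx
      · rw [if_neg hx]; exact hbdry i x (lt_of_not_ge hx)
    rw [hveq]
    have hsetm : MeasurableSet {x : ℝ | |x| ≤ 1 - α} :=
      measurableSet_le measurable_id.abs measurable_const
    refine Measurable.ite hsetm ?_ measurable_const
    refine measurable_const.mul ?_
    have hF : Measurable (fun p : ℝ × (Fin dt → ℝ) => ψ (fun j => g i (p.1 - p.2 j))) := by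
      refine hψc.measurable.comp (measurable_pi_lambda _ fun j => ?_)
      exact hgi.comp (measurable_fst.sub ((measurable_pi_apply j).comp measurable_snd))
    exact (hF.stronglyMeasurable.integral_prod_right').measurable
  have measg_succ : ∀ j : ℕ, Measurable (v j) → Measurable (g (j + 1)) := by
    intro j hvj
    have : g (j + 1) = fun x =>
        (1 / (2 * α) ^ d) * ∫ ω in Sd, φ (fun j' => v j (x + ω j')) := by
      funext x; exact hgS j x
    rw [this]
    refine measurable_const.mul ?_
    have hF : Measurable (fun p : ℝ × (Fin d → ℝ) => φ (fun j' => v j (p.1 + p.2 j'))) := by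
      refine hφc.measurable.comp (measurable_pi_lambda _ fun j' => ?_)
      exact hvj.comp (measurable_fst.add ((measurable_pi_apply j').comp measurable_snd))
    exact (hF.stronglyMeasurable.integral_prod_right').measurable
  have meas : ∀ i : ℕ, Measurable (g i) ∧ Measurable (v i) := by
    intro i
    induction i with
    | zero =>
        have hg0m : Measurable (g 0) := by
          have : g 0 = fun _ => umin := funext hg0
          rw [this]; exact measurable_const
        exact ⟨hg0m, measv_of_g 0 hg0m⟩
    | succ j ih =>
        have hgm : Measurable (g (j + 1)) := measg_succ j ih.2
        exact ⟨hgm, measv_of_g (j + 1) hgm⟩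
  -- main monotonicity induction
  have main : ∀ i : ℕ, (∀ x ∈ Set.Icc (-1:ℝ) 1, u i x ≤ u (i + 1) x) ∧
      (∀ y : ℝ, v i y ≤ v (i + 1) y) := by
    intro i
    induction i with
    | zero =>
        have hu01 : ∀ x ∈ Set.Icc (-1:ℝ) 1, u 0 x ≤ u 1 x := by
          intro x hx
          rw [hu0 x hx, hrecu 0 x hx]
          have hint : IntegrableOn (fun ω : Fin d → ℝ => φ (fun j => v 0 (x + ω j)))
              Sd volume := integφ (v 0) (meas 0).2 x
          have hlow : (umin * (2 * α) ^ d) ≤ ∫ ω in Sd, φ (fun j => v 0 (x + ω j)) := by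
            have h1 : ∫ _ω in Sd, umin ≤ ∫ ω in Sd, φ (fun j => v 0 (x + ω j)) :=
              setIntegral_mono_on (integrableOn_const hvold_ne)
                hint hSdm (fun ω _ => humin _)
            rwa [setIntegral_const, measureReal_def, hvold_toReal, smul_eq_mul, mul_comm] at h1
          calc umin = (1 / (2 * α) ^ d) * (umin * (2 * α) ^ d) := by
                field_simp
            _ ≤ (1 / (2 * α) ^ d) * ∫ ω in Sd, φ (fun j => v 0 (x + ω j)) :=
                mul_le_mul_of_nonneg_left hlow hcd_pos.le
        refine ⟨hu01, fun y => ?_⟩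
        by_cases hy : |y| ≤ 1 - α
        · rw [hvg 0 y hy, hvg 1 y hy]
          refine mul_le_mul_of_nonneg_left ?_ hct_pos.le
          refine setIntegral_mono_on (integψ (g 0) (meas 0).1 y)
            (integψ (g 1) (meas 1).1 y) hStm fun ω hω => ?_
          refine hψm fun j => ?_
          have hmem := harg y hy ω hω j
          rw [← hue 0 _ hmem, ← hue 1 _ hmem]
          exact hu01 _ hmem
        · rw [hbdry 0 y (lt_of_not_ge hy), hbdry 1 y (lt_of_not_ge hy)]
    | succ i ih =>
        have huS : ∀ x ∈ Set.Icc (-1:ℝ) 1, u (i + 1) x ≤ u (i + 2) x := by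
          intro x hx
          rw [hrecu i x hx, hrecu (i + 1) x hx]
          refine mul_le_mul_of_nonneg_left ?_ hcd_pos.le
          refine setIntegral_mono_on (integφ (v i) (meas i).2 x)
            (integφ (v (i + 1)) (meas (i + 1)).2 x) hSdm fun ω _ => ?_
          exact hφm fun j => ih.2 (x + ω j)
        refine ⟨huS, fun y => ?_⟩
        by_cases hy : |y| ≤ 1 - α
        · rw [hvg (i + 1) y hy, hvg (i + 2) y hy]
          refine mul_le_mul_of_nonneg_left ?_ hct_pos.le
          refine setIntegral_mono_on (integψ (g (i + 1)) (meas (i + 1)).1 y)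
            (integψ (g (i + 2)) (meas (i + 2)).1 y) hStm fun ω hω => ?_
          refine hψm fun j => ?_
          have hmem := harg y hy ω hω j
          rw [← hue (i + 1) _ hmem, ← hue (i + 2) _ hmem]
          exact huS _ hmem
        · rw [hbdry (i + 1) y (lt_of_not_ge hy), hbdry (i + 2) y (lt_of_not_ge hy)]
  intro i x hx
  exact ⟨(main i).1 x hx, (main i).2 x⟩
end

section
/- Sandwich/comparison for DE with improved boundaries: in the discrete DE system, if two trajectories (u_l(i), v_l(i)) and (û_l(i), v̂_l(i)) satisfy u_l(0) ≤ û_l(0) for all l and use boundary values v_opt ≤ v̂_opt respectively, then u_l(i) ≤ û_l(i) and v_l(i) ≤ v̂_l(i) for all l and all i. -/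
/-- Sandwich/comparison for density evolution with improved boundaries: if two
trajectories satisfy u_l(0) ≤ û_l(0) and use boundary values v_opt ≤ v̂_opt,
then u_l(i) ≤ û_l(i) and v_l(i) ≤ v̂_l(i) for all sections l and all i. -/
theorem de_comparison
    (L W d dt : ℕ) (hW : 1 ≤ W) (hL : W ≤ L)
    (φ : (Fin d → ℝ) → ℝ) (ψ : (Fin dt → ℝ) → ℝ)
    (hφ : Monotone φ) (hψ : Monotone ψ)
    (u v uh vh : ℕ → ℤ → ℝ) (vopt vopth : ℝ)
    (hvle : vopt ≤ vopth)
    (hu0 : ∀ l : ℤ, 0 ≤ l → l ≤ (L : ℤ) - 1 → u 0 l ≤ uh 0 l)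
    (hrecu : ∀ i : ℕ, ∀ l : ℤ, 0 ≤ l → l ≤ (L : ℤ) - 1 →
      u (i + 1) l = (1 / (W : ℝ) ^ d) *
        ∑ w : Fin d → Fin W, φ (fun j => v i (l + (w j : ℤ))))
    (hrecuh : ∀ i : ℕ, ∀ l : ℤ, 0 ≤ l → l ≤ (L : ℤ) - 1 →
      uh (i + 1) l = (1 / (W : ℝ) ^ d) *
        ∑ w : Fin d → Fin W, φ (fun j => vh i (l + (w j : ℤ))))
    (hrecv : ∀ i : ℕ, ∀ l : ℤ, (W : ℤ) - 1 ≤ l → l ≤ (L : ℤ) - 1 →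
      v i l = (1 / (W : ℝ) ^ dt) *
        ∑ w : Fin dt → Fin W, ψ (fun j => u i (l - (w j : ℤ))))
    (hrecvh : ∀ i : ℕ, ∀ l : ℤ, (W : ℤ) - 1 ≤ l → l ≤ (L : ℤ) - 1 →
      vh i l = (1 / (W : ℝ) ^ dt) *
        ∑ w : Fin dt → Fin W, ψ (fun j => uh i (l - (w j : ℤ))))
    (hbdry : ∀ i : ℕ, ∀ l : ℤ, ¬((W : ℤ) - 1 ≤ l ∧ l ≤ (L : ℤ) - 1) → v i l = vopt)
    (hbdryh : ∀ i : ℕ, ∀ l : ℤ, ¬((W : ℤ) - 1 ≤ l ∧ l ≤ (L : ℤ) - 1) → vh i l = vopth) :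
    ∀ i : ℕ, (∀ l : ℤ, 0 ≤ l → l ≤ (L : ℤ) - 1 → u i l ≤ uh i l) ∧
      (∀ l : ℤ, v i l ≤ vh i l) := by

  have hW0 : (0:ℝ) < (W:ℝ) ^ d := by positivity
  have hW0' : (0:ℝ) < (W:ℝ) ^ dt := by positivity
  have key : ∀ i : ℕ,
      (∀ l : ℤ, 0 ≤ l → l ≤ (L : ℤ) - 1 → u i l ≤ uh i l) →
      (∀ l : ℤ, v i l ≤ vh i l) := by
    intro i hu l
    by_cases hl : (W : ℤ) - 1 ≤ l ∧ l ≤ (L : ℤ) - 1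
    · rw [hrecv i l hl.1 hl.2, hrecvh i l hl.1 hl.2]
      apply mul_le_mul_of_nonneg_left _ (by positivity)
      apply Finset.sum_le_sum
      intro w _
      apply hψ
      intro j
      have hwj : (w j : ℤ) ≤ (W:ℤ) - 1 := by
        have := (w j).isLt; omega
      have hwj0 : (0:ℤ) ≤ (w j : ℤ) := by positivity
      exact hu _ (by omega) (by omega)
    · rw [hbdry i l hl, hbdryh i l hl]; exact hvle
  intro i
  induction i with
  | zero => exact ⟨hu0, key 0 hu0⟩
  | succ n ih =>
    have hv := ih.2
    have hu : ∀ l : ℤ, 0 ≤ l → l ≤ (L : ℤ) - 1 → u (n+1) l ≤ uh (n+1) l := by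
      intro l h0 h1
      rw [hrecu n l h0 h1, hrecuh n l h0 h1]
      apply mul_le_mul_of_nonneg_left _ (by positivity)
      apply Finset.sum_le_sum
      intro w _
      apply hφ
      intro j
      exact hv _
    exact ⟨hu, key (n+1) hu⟩
end
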